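/- For N ≥ 2, let m = Δ_1 + ⋯ + Δ_N be a regular multisegment with Δ_i = [a_i; b_i] and b_1 > b_2 > ⋯ > b_N, and suppose the associated permutation σ = σ_m avoids the patterns 4231 and 3412. Then: (1) Δ_1 or Δ_{σ(1)} is a good segment of m; (2) Δ_N or Δ_{σ(N)} is a good segment of m; (3) if σ(N) = 1 then Δ_N is a good right segment of m; (4) if σ(1) = N then Δ_1 is a good left segment of m; (5) if both σ(N) = 1 and σ(1) = N then m is a ladder. -/
import Mathlib


/-- A segment `[a;b]` is a pair of integers `a ≤ b`. -/
structure Segment where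
  a : ℤ
  b : ℤ
  le : a ≤ b

namespace Segment

/-- `Δ ≺ Δ'` : the segment `Δ = [a;b]` precedes `Δ' = [c;d]`,
i.e. `a < c`, `c - 1 ≤ b` and `b < d`. -/
def prec (Δ Δ' : Segment) : Prop :=
  Δ.a < Δ'.a ∧ Δ'.a - 1 ≤ Δ.b ∧ Δ.b < Δ'.b

/-- `←Δ = [a-1; b-1]`. -/
def shift (Δ : Segment) : Segment :=
  ⟨Δ.a - 1, Δ.b - 1, by have := Δ.le; omega⟩

instance (Δ Δ' : Segment) : Decidable (Δ.prec Δ') := by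
  unfold prec; infer_instance

end Segment

/-- A multisegment (given as an indexed family of segments) is regular if the beginnings
of its segments are pairwise distinct and the ends of its segments are pairwise distinct. -/
def Regular {ι : Type*} (Δ : ι → Segment) : Prop :=
  (∀ i j : ι, (Δ i).a = (Δ j).a → i = j) ∧ (∀ i j : ι, (Δ i).b = (Δ j).b → i = j)

/-- The condition `LC(Δ₀, m)` : there is an injective function
`f : X_{Δ₀,m} → Y_{Δ₀,m}` with `Δ_{f i} ≺ Δ_i` for all `i ∈ X_{Δ₀,m}`,
where `X_{Δ₀,m} = {i | Δ₀ ≺ Δ_i}` and `Y_{Δ₀,m} = {i | ←Δ₀ ≺ Δ_i}`. -/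
def LC {ι : Type*} (Δ₀ : Segment) (Δ : ι → Segment) : Prop :=
  ∃ f : ι → ι, Set.InjOn f {i | Δ₀.prec (Δ i)} ∧
    ∀ i : ι, Δ₀.prec (Δ i) → Δ₀.shift.prec (Δ (f i)) ∧ (Δ (f i)).prec (Δ i)

/-- The condition `RC(Δ₀, m)` : there is an injective function
`f : X̃_{Δ₀,m} → Ỹ_{Δ₀,m}` with `Δ_i ≺ Δ_{f i}` for all `i ∈ X̃_{Δ₀,m}`,
where `X̃_{Δ₀,m} = {i | Δ_i ≺ Δ₀}` and `Ỹ_{Δ₀,m} = {i | ←Δ_i ≺ Δ₀}`. -/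
def RC {ι : Type*} (Δ₀ : Segment) (Δ : ι → Segment) : Prop :=
  ∃ f : ι → ι, Set.InjOn f {i | (Δ i).prec Δ₀} ∧
    ∀ i : ι, (Δ i).prec Δ₀ → (Δ (f i)).shift.prec Δ₀ ∧ (Δ i).prec (Δ (f i))

/-- The sub-multisegment of `Δ` indexed by the finite set `S` is a ladder: its segments can
be enumerated so that both the beginnings and the ends are strictly decreasing. -/
def IsLadder {ι : Type*} (Δ : ι → Segment) (S : Finset ι) : Prop :=
  ∃ e : Fin S.card ≃ {x // x ∈ S}, ∀ k l : Fin S.card, k < l →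
    (Δ (e l).val).a < (Δ (e k).val).a ∧ (Δ (e l).val).b < (Δ (e k).val).b

/-- `Δ_{i₀}` is a good left segment of the multisegment `m` given by the family `Δ` :
`LC(Δ_{i₀}, m)`, `RC(Δ_{i₀}, m)` and `LC(Δ_{i₀}, m∖Δ_{i₀})` all hold. -/
def GoodLeft {ι : Type*} (Δ : ι → Segment) (i₀ : ι) : Prop :=
  LC (Δ i₀) Δ ∧ RC (Δ i₀) Δ ∧ LC (Δ i₀) (fun i : {i : ι // i ≠ i₀} => Δ i.val)

/-- `Δ_{i₀}` is a good right segment of the multisegment `m` given by the family `Δ` :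
`LC(Δ_{i₀}, m)`, `RC(Δ_{i₀}, m)` and `RC(Δ_{i₀}, m∖Δ_{i₀})` all hold. -/
def GoodRight {ι : Type*} (Δ : ι → Segment) (i₀ : ι) : Prop :=
  LC (Δ i₀) Δ ∧ RC (Δ i₀) Δ ∧ RC (Δ i₀) (fun i : {i : ι // i ≠ i₀} => Δ i.val)

/-- A good segment is one which is good left or good right. -/
def Good {ι : Type*} (Δ : ι → Segment) (i₀ : ι) : Prop :=
  GoodLeft Δ i₀ ∨ GoodRight Δ i₀

/-- `σ ∈ S_N` contains the pattern `τ ∈ S_k` : there are indices `i_1 < ⋯ < i_k` with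
`σ(i_s) < σ(i_t) ↔ τ(s) < τ(t)` for all `s, t`. -/
def ContainsPattern {N k : ℕ} (σ : Equiv.Perm (Fin N)) (τ : Equiv.Perm (Fin k)) : Prop :=
  ∃ g : Fin k ↪o Fin N, ∀ s t : Fin k, σ (g s) < σ (g t) ↔ τ s < τ t

/-- `σ` avoids the pattern `τ`. -/
def Avoids {N k : ℕ} (σ : Equiv.Perm (Fin N)) (τ : Equiv.Perm (Fin k)) : Prop :=
  ¬ ContainsPattern σ τ

/-- The pattern `4231` (in one-line notation), as a permutation of `Fin 4`. -/
def perm4231 : Equiv.Perm (Fin 4) := Equiv.swap 0 3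

/-- The pattern `3412` (in one-line notation), as a permutation of `Fin 4`. -/
def perm3412 : Equiv.Perm (Fin 4) := Equiv.swap 0 2 * Equiv.swap 1 3

section Helpers

lemma shift_prec_self (Δ : Segment) : Δ.shift.prec Δ := by
  obtain ⟨a, b, h⟩ := Δ
  refine ⟨?_, ?_, ?_⟩ <;> simp [Segment.shift] <;> omega

lemma LC_of_not_prec {ι : Type*} (Δ₀ : Segment) (Δ : ι → Segment)
    (h : ∀ i, ¬ Δ₀.prec (Δ i)) : LC Δ₀ Δ :=
  ⟨id, fun x hx => absurd hx (h x), fun i hi => absurd hi (h i)⟩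

lemma RC_of_not_prec {ι : Type*} (Δ₀ : Segment) (Δ : ι → Segment)
    (h : ∀ i, ¬ (Δ i).prec Δ₀) : RC Δ₀ Δ :=
  ⟨id, fun x hx => absurd hx (h x), fun i hi => absurd hi (h i)⟩

lemma LC_chain {N : ℕ} (Δ : Fin N → Segment) (c : Fin N)
    (ha : ∀ i j : Fin N, (Δ i).a = (Δ j).a → i = j)
    (hinv : ∀ u v : Fin N, (Δ c).prec (Δ u) → (Δ c).prec (Δ v) →
      (Δ u).a < (Δ v).a → (Δ u).b < (Δ v).b) :
    LC (Δ c) Δ := by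
  classical
  have key : ∀ i : Fin N, ∃ u : Fin N, (Δ c).prec (Δ i) →
      ((Δ c).shift.prec (Δ u) ∧ (Δ u).prec (Δ i)) ∧ (Δ u).a < (Δ i).a ∧
      ∀ j : Fin N, (Δ c).prec (Δ j) → (Δ j).a < (Δ i).a → (Δ j).a ≤ (Δ u).a := by
    intro i
    by_cases hi : (Δ c).prec (Δ i)
    · set T : Finset (Fin N) := Finset.univ.filter
        (fun j => (Δ c).prec (Δ j) ∧ (Δ j).a < (Δ i).a) with hT
      rcases T.eq_empty_or_nonempty with hTe | hTne
      · refine ⟨c, fun _ => ⟨⟨shift_prec_self _, hi⟩, hi.1, ?_⟩⟩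
        intro j hj hj2
        have hmem : j ∈ T := Finset.mem_filter.mpr ⟨Finset.mem_univ _, hj, hj2⟩
        rw [hTe] at hmem
        simp at hmem
      · obtain ⟨u, hu, hmax⟩ := T.exists_max_image (fun j => (Δ j).a) hTne
        rw [hT, Finset.mem_filter] at hu
        obtain ⟨-, hu1, hu2⟩ := hu
        refine ⟨u, fun _ => ⟨⟨?_, ?_⟩, hu2, ?_⟩⟩
        · obtain ⟨h1, h2, h3⟩ := hu1
          obtain ⟨g1, g2, g3⟩ := hi
          exact ⟨by simp [Segment.shift]; omega, by simp [Segment.shift]; omega,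
            by simp [Segment.shift]; omega⟩
        · obtain ⟨h1, h2, h3⟩ := hu1
          obtain ⟨g1, g2, g3⟩ := hi
          exact ⟨hu2, by omega, hinv u i ⟨h1, h2, h3⟩ ⟨g1, g2, g3⟩ hu2⟩
        · intro j hj hj2
          exact hmax j (Finset.mem_filter.mpr ⟨Finset.mem_univ _, hj, hj2⟩)
    · exact ⟨i, fun h => absurd h hi⟩
  refine ⟨fun i => (key i).choose, ?_, fun i hi => ((key i).choose_spec hi).1⟩
  intro x hx y hy hxy
  have px := (key x).choose_spec hx
  have py := (key y).choose_spec hy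
  have hxy' : (key x).choose = (key y).choose := hxy
  rcases lt_trichotomy ((Δ x).a) ((Δ y).a) with h | h | h
  · exfalso
    have h1 : (Δ ((key x).choose)).a < (Δ x).a := px.2.1
    have h2 : (Δ x).a ≤ (Δ ((key y).choose)).a := py.2.2 x hx h
    rw [hxy'] at h1; omega
  · exact ha x y h
  · exfalso
    have h1 : (Δ ((key y).choose)).a < (Δ y).a := py.2.1
    have h2 : (Δ y).a ≤ (Δ ((key x).choose)).a := px.2.2 y hy h
    rw [← hxy'] at h1; omega

lemma RC_chain {N : ℕ} (Δ : Fin N → Segment) (c : Fin N)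
    (hbinj : ∀ i j : Fin N, (Δ i).b = (Δ j).b → i = j)
    (hinv : ∀ u v : Fin N, (Δ u).prec (Δ c) → (Δ v).prec (Δ c) →
      (Δ u).b < (Δ v).b → (Δ u).a < (Δ v).a) :
    RC (Δ c) Δ := by
  classical
  have key : ∀ i : Fin N, ∃ u : Fin N, (Δ i).prec (Δ c) →
      ((Δ u).shift.prec (Δ c) ∧ (Δ i).prec (Δ u)) ∧ (Δ i).b < (Δ u).b ∧
      ∀ j : Fin N, (Δ j).prec (Δ c) → (Δ i).b < (Δ j).b → (Δ u).b ≤ (Δ j).b := by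
    intro i
    by_cases hi : (Δ i).prec (Δ c)
    · set T : Finset (Fin N) := Finset.univ.filter
        (fun j => (Δ j).prec (Δ c) ∧ (Δ i).b < (Δ j).b) with hT
      rcases T.eq_empty_or_nonempty with hTe | hTne
      · refine ⟨c, fun _ => ⟨⟨shift_prec_self _, hi⟩, hi.2.2, ?_⟩⟩
        intro j hj hj2
        have hmem : j ∈ T := Finset.mem_filter.mpr ⟨Finset.mem_univ _, hj, hj2⟩
        rw [hTe] at hmem
        simp at hmem
      · obtain ⟨u, hu, hmin⟩ := T.exists_min_image (fun j => (Δ j).b) hTne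
        rw [hT, Finset.mem_filter] at hu
        obtain ⟨-, hu1, hu2⟩ := hu
        refine ⟨u, fun _ => ⟨⟨?_, ?_⟩, hu2, ?_⟩⟩
        · obtain ⟨h1, h2, h3⟩ := hu1
          obtain ⟨g1, g2, g3⟩ := hi
          exact ⟨by simp [Segment.shift]; omega, by simp [Segment.shift]; omega,
            by simp [Segment.shift]; omega⟩
        · obtain ⟨h1, h2, h3⟩ := hu1
          obtain ⟨g1, g2, g3⟩ := hi
          exact ⟨hinv i u ⟨g1, g2, g3⟩ ⟨h1, h2, h3⟩ hu2, by omega, hu2⟩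
        · intro j hj hj2
          exact hmin j (Finset.mem_filter.mpr ⟨Finset.mem_univ _, hj, hj2⟩)
    · exact ⟨i, fun h => absurd h hi⟩
  refine ⟨fun i => (key i).choose, ?_, fun i hi => ((key i).choose_spec hi).1⟩
  intro x hx y hy hxy
  have px := (key x).choose_spec hx
  have py := (key y).choose_spec hy
  have hxy' : (key x).choose = (key y).choose := hxy
  rcases lt_trichotomy ((Δ x).b) ((Δ y).b) with h | h | h
  · exfalso
    have h1 : (Δ x).b < (Δ ((key x).choose)).b := px.2.1
    have h2 : (Δ ((key x).choose)).b ≤ (Δ y).b := px.2.2 y hy h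
    have h3 : (Δ y).b < (Δ ((key y).choose)).b := py.2.1
    rw [hxy'] at h2; omega
  · exact hbinj x y h
  · exfalso
    have h1 : (Δ y).b < (Δ ((key y).choose)).b := py.2.1
    have h2 : (Δ ((key y).choose)).b ≤ (Δ x).b := py.2.2 x hx h
    have h3 : (Δ x).b < (Δ ((key x).choose)).b := px.2.1
    rw [hxy'] at h3; omega

end Helpers
section Patterns

lemma strictMono_fin4 {α : Type*} [Preorder α] (k1 k2 k3 k4 : α)
    (h12 : k1 < k2) (h23 : k2 < k3) (h34 : k3 < k4) :
    StrictMono (fun s : Fin 4 => if s.val = 0 then k1 else if s.val = 1 then k2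
      else if s.val = 2 then k3 else k4) := by
  intro s t hst
  fin_cases s <;> fin_cases t <;> simp_all <;>
    first
      | exact h12
      | exact h23
      | exact h34
      | exact h12.trans h23
      | exact h23.trans h34
      | exact (h12.trans h23).trans h34

lemma pattern_iff_4231 {β : Type*} [LinearOrder β] (j1 j2 j3 j4 : β)
    (o1 : j4 < j2) (o2 : j2 < j3) (o3 : j3 < j1) :
    ∀ s t : Fin 4,
      ((if s.val = 0 then j1 else if s.val = 1 then j2 else if s.val = 2 then j3 else j4) <
       (if t.val = 0 then j1 else if t.val = 1 then j2 else if t.val = 2 then j3 else j4)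
        ↔ perm4231 s < perm4231 t) := by
  have h21 : j2 < j1 := o2.trans o3
  have h41 : j4 < j1 := o1.trans h21
  have h43 : j4 < j3 := o1.trans o2
  intro s t
  fin_cases s <;> fin_cases t <;>
    simp (config := { decide := true }) [perm4231] <;>
    first
      | exact o1 | exact o2 | exact o3 | exact h21 | exact h41 | exact h43
      | exact le_of_lt o1 | exact le_of_lt o2 | exact le_of_lt o3
      | exact le_of_lt h21 | exact le_of_lt h41 | exact le_of_lt h43

lemma pattern_iff_3412 {β : Type*} [LinearOrder β] (j1 j2 j3 j4 : β)
    (o1 : j3 < j4) (o2 : j4 < j1) (o3 : j1 < j2) :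
    ∀ s t : Fin 4,
      ((if s.val = 0 then j1 else if s.val = 1 then j2 else if s.val = 2 then j3 else j4) <
       (if t.val = 0 then j1 else if t.val = 1 then j2 else if t.val = 2 then j3 else j4)
        ↔ perm3412 s < perm3412 t) := by
  have h31 : j3 < j1 := o1.trans o2
  have h32 : j3 < j2 := h31.trans o3
  have h42 : j4 < j2 := o2.trans o3
  intro s t
  fin_cases s <;> fin_cases t <;>
    simp (config := { decide := true }) [perm3412] <;>
    first
      | exact o1 | exact o2 | exact o3 | exact h31 | exact h32 | exact h42
      | exact le_of_lt o1 | exact le_of_lt o2 | exact le_of_lt o3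
      | exact le_of_lt h31 | exact le_of_lt h32 | exact le_of_lt h42

lemma symm_lt_of_a_lt {N : ℕ} (σ : Equiv.Perm (Fin N)) (Δ : Fin N → Segment)
    (hσ : ∀ i j : Fin N, i < j → (Δ (σ i)).a < (Δ (σ j)).a)
    (x y : Fin N) (h : (Δ x).a < (Δ y).a) : σ.symm x < σ.symm y := by
  rcases lt_trichotomy (σ.symm x) (σ.symm y) with h' | h' | h'
  · exact h'
  · exfalso
    have : x = y := by
      have := congrArg σ h'
      simpa using this
    rw [this] at h; omega
  · exfalso
    have h2 := hσ _ _ h'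
    rw [Equiv.apply_symm_apply, Equiv.apply_symm_apply] at h2
    omega

lemma contains4231 {N : ℕ} (σ : Equiv.Perm (Fin N)) (Δ : Fin N → Segment)
    (hσ : ∀ i j : Fin N, i < j → (Δ (σ i)).a < (Δ (σ j)).a)
    (i1 i2 i3 i4 : Fin N)
    (h12 : (Δ i1).a < (Δ i2).a) (h23 : (Δ i2).a < (Δ i3).a) (h34 : (Δ i3).a < (Δ i4).a)
    (o1 : i4 < i2) (o2 : i2 < i3) (o3 : i3 < i1) :
    ContainsPattern σ perm4231 := by
  have m12 := symm_lt_of_a_lt σ Δ hσ i1 i2 h12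
  have m23 := symm_lt_of_a_lt σ Δ hσ i2 i3 h23
  have m34 := symm_lt_of_a_lt σ Δ hσ i3 i4 h34
  refine ⟨OrderEmbedding.ofStrictMono _
    (strictMono_fin4 (σ.symm i1) (σ.symm i2) (σ.symm i3) (σ.symm i4) m12 m23 m34), ?_⟩
  intro s t
  have hg : ∀ s : Fin 4,
      σ ((OrderEmbedding.ofStrictMono _
        (strictMono_fin4 (σ.symm i1) (σ.symm i2) (σ.symm i3) (σ.symm i4) m12 m23 m34)) s) =
      (if s.val = 0 then i1 else if s.val = 1 then i2 else if s.val = 2 then i3 else i4) := by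
    intro s
    simp only [OrderEmbedding.coe_ofStrictMono, apply_ite σ, Equiv.apply_symm_apply]
  rw [hg, hg]
  exact pattern_iff_4231 i1 i2 i3 i4 o1 o2 o3 s t

lemma contains3412 {N : ℕ} (σ : Equiv.Perm (Fin N)) (Δ : Fin N → Segment)
    (hσ : ∀ i j : Fin N, i < j → (Δ (σ i)).a < (Δ (σ j)).a)
    (i1 i2 i3 i4 : Fin N)
    (h12 : (Δ i1).a < (Δ i2).a) (h23 : (Δ i2).a < (Δ i3).a) (h34 : (Δ i3).a < (Δ i4).a)
    (o1 : i3 < i4) (o2 : i4 < i1) (o3 : i1 < i2) :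
    ContainsPattern σ perm3412 := by
  have m12 := symm_lt_of_a_lt σ Δ hσ i1 i2 h12
  have m23 := symm_lt_of_a_lt σ Δ hσ i2 i3 h23
  have m34 := symm_lt_of_a_lt σ Δ hσ i3 i4 h34
  refine ⟨OrderEmbedding.ofStrictMono _
    (strictMono_fin4 (σ.symm i1) (σ.symm i2) (σ.symm i3) (σ.symm i4) m12 m23 m34), ?_⟩
  intro s t
  have hg : ∀ s : Fin 4,
      σ ((OrderEmbedding.ofStrictMono _
        (strictMono_fin4 (σ.symm i1) (σ.symm i2) (σ.symm i3) (σ.symm i4) m12 m23 m34)) s) =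
      (if s.val = 0 then i1 else if s.val = 1 then i2 else if s.val = 2 then i3 else i4) := by
    intro s
    simp only [OrderEmbedding.coe_ofStrictMono, apply_ite σ, Equiv.apply_symm_apply]
  rw [hg, hg]
  exact pattern_iff_3412 i1 i2 i3 i4 o1 o2 o3 s t

end Patterns
theorem statement7 {N : ℕ} (hN : 2 ≤ N) (Δ : Fin N → Segment) (hreg : Regular Δ)
    (hb : ∀ i j : Fin N, i < j → (Δ j).b < (Δ i).b)
    (σ : Equiv.Perm (Fin N))
    (hσ : ∀ i j : Fin N, i < j → (Δ (σ i)).a < (Δ (σ j)).a)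
    (hav1 : Avoids σ perm4231) (hav2 : Avoids σ perm3412) :
    (Good Δ ⟨0, by omega⟩ ∨ Good Δ (σ ⟨0, by omega⟩)) ∧
    (Good Δ ⟨N - 1, by omega⟩ ∨ Good Δ (σ ⟨N - 1, by omega⟩)) ∧
    (σ ⟨N - 1, by omega⟩ = ⟨0, by omega⟩ → GoodRight Δ ⟨N - 1, by omega⟩) ∧
    (σ ⟨0, by omega⟩ = ⟨N - 1, by omega⟩ → GoodLeft Δ ⟨0, by omega⟩) ∧
    (σ ⟨N - 1, by omega⟩ = ⟨0, by omega⟩ ∧ σ ⟨0, by omega⟩ = ⟨N - 1, by omega⟩ →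
      IsLadder Δ Finset.univ) := by
  classical
  obtain ⟨ha, hbinj⟩ := hreg
  have h0N : 0 < N := by omega
  have hN1 : N - 1 < N := by omega
  set n0 : Fin N := ⟨0, h0N⟩ with hn0
  set nl : Fin N := ⟨N - 1, hN1⟩ with hnl
  have ne0 : ∀ i : Fin N, i ≠ n0 → n0 < i := by
    intro i hi
    rw [Fin.lt_def]
    have h1 : i.val ≠ 0 := fun h => hi (Fin.ext (by simp [hn0, h]))
    simp only [hn0]
    omega
  have neL : ∀ i : Fin N, i ≠ nl → i < nl := by
    intro i hi
    rw [Fin.lt_def]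
    have h0 : i.val < N := i.isLt
    have h1 : i.val ≠ N - 1 := fun h => hi (Fin.ext (by simp [hnl, h]))
    simp only [hnl]
    omega
  have le_nl : ∀ i : Fin N, i ≤ nl := by
    intro i
    rw [Fin.le_def]
    have h0 : i.val < N := i.isLt
    simp only [hnl]
    omega
  have idx_lt : ∀ i j : Fin N, (Δ j).b < (Δ i).b → i < j := by
    intro i j h
    rcases lt_trichotomy i j with h' | h' | h'
    · exact h'
    · exfalso; rw [h'] at h; omega
    · exfalso; have := hb j i h'; omega
  have hamin : ∀ i : Fin N, i ≠ σ n0 → (Δ (σ n0)).a < (Δ i).a := by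
    intro i hi
    have h1 : σ.symm i ≠ n0 := fun h => hi (by rw [← h, Equiv.apply_symm_apply])
    have h2 := hσ n0 (σ.symm i) (ne0 _ h1)
    rwa [Equiv.apply_symm_apply] at h2
  have hamax : ∀ i : Fin N, i ≠ σ nl → (Δ i).a < (Δ (σ nl)).a := by
    intro i hi
    have h1 : σ.symm i ≠ nl := fun h => hi (by rw [← h, Equiv.apply_symm_apply])
    have h2 := hσ (σ.symm i) nl (neL _ h1)
    rwa [Equiv.apply_symm_apply] at h2
  have hbmax : ∀ i : Fin N, i ≠ n0 → (Δ i).b < (Δ n0).b := fun i hi => hb n0 i (ne0 i hi)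
  have hbmin : ∀ i : Fin N, i ≠ nl → (Δ nl).b < (Δ i).b := fun i hi => hb i nl (neL i hi)
  -- the four "good" criteria
  have good_c : (∀ u v : Fin N, (Δ (σ n0)).prec (Δ u) → (Δ (σ n0)).prec (Δ v) →
      (Δ u).a < (Δ v).a → (Δ u).b < (Δ v).b) → GoodRight Δ (σ n0) := by
    intro h
    have noprec : ∀ i : Fin N, ¬ (Δ i).prec (Δ (σ n0)) := by
      intro i hi
      rcases eq_or_ne i (σ n0) with rfl | hne
      · exact absurd hi.1 (lt_irrefl _)
      · have h1 := hamin i hne; have h2 := hi.1; omega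
    exact ⟨LC_chain Δ (σ n0) ha h, RC_of_not_prec _ _ noprec,
      RC_of_not_prec _ _ (fun i => noprec i.1)⟩
  have good_0 : (∀ u v : Fin N, (Δ u).prec (Δ n0) → (Δ v).prec (Δ n0) →
      (Δ u).b < (Δ v).b → (Δ u).a < (Δ v).a) → GoodLeft Δ n0 := by
    intro h
    have noprec : ∀ i : Fin N, ¬ (Δ n0).prec (Δ i) := by
      intro i hi
      rcases eq_or_ne i n0 with rfl | hne
      · exact absurd hi.2.2 (lt_irrefl _)
      · have h1 := hbmax i hne; have h2 := hi.2.2; omega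
    exact ⟨LC_of_not_prec _ _ noprec, RC_chain Δ n0 hbinj h,
      LC_of_not_prec _ _ (fun i => noprec i.1)⟩
  have good_l : (∀ u v : Fin N, (Δ nl).prec (Δ u) → (Δ nl).prec (Δ v) →
      (Δ u).a < (Δ v).a → (Δ u).b < (Δ v).b) → GoodRight Δ nl := by
    intro h
    have noprec : ∀ i : Fin N, ¬ (Δ i).prec (Δ nl) := by
      intro i hi
      rcases eq_or_ne i nl with rfl | hne
      · exact absurd hi.2.2 (lt_irrefl _)
      · have h1 := hbmin i hne; have h2 := hi.2.2; omega
    exact ⟨LC_chain Δ nl ha h, RC_of_not_prec _ _ noprec,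
      RC_of_not_prec _ _ (fun i => noprec i.1)⟩
  have good_d : (∀ u v : Fin N, (Δ u).prec (Δ (σ nl)) → (Δ v).prec (Δ (σ nl)) →
      (Δ u).b < (Δ v).b → (Δ u).a < (Δ v).a) → GoodLeft Δ (σ nl) := by
    intro h
    have noprec : ∀ i : Fin N, ¬ (Δ (σ nl)).prec (Δ i) := by
      intro i hi
      rcases eq_or_ne i (σ nl) with rfl | hne
      · exact absurd hi.1 (lt_irrefl _)
      · have h1 := hamax i hne; have h2 := hi.1; omega
    exact ⟨LC_of_not_prec _ _ noprec, RC_chain Δ (σ nl) hbinj h,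
      LC_of_not_prec _ _ (fun i => noprec i.1)⟩
  -- Part 1
  have part1 : Good Δ n0 ∨ Good Δ (σ n0) := by
    by_cases h1 : ∀ u v : Fin N, (Δ (σ n0)).prec (Δ u) → (Δ (σ n0)).prec (Δ v) →
        (Δ u).a < (Δ v).a → (Δ u).b < (Δ v).b
    · exact Or.inr (Or.inr (good_c h1))
    · push_neg at h1
      obtain ⟨u, v, hcu, hcv, hauv, hbvu'⟩ := h1
      have huv : u ≠ v := fun h => by rw [h] at hauv; omega
      have hbvu : (Δ v).b < (Δ u).b := by
        rcases lt_or_eq_of_le hbvu' with h | h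
        · exact h
        · exact absurd (hbinj v u h) (Ne.symm huv)
      refine Or.inl (Or.inl (good_0 ?_))
      intro p q hp hq hbpq
      by_contra hnapq
      have hpq : p ≠ q := fun h => by rw [h] at hbpq; omega
      have haqp : (Δ q).a < (Δ p).a := by
        rcases lt_trichotomy ((Δ p).a) ((Δ q).a) with h | h | h
        · exact absurd h hnapq
        · exact absurd (ha _ _ h) hpq
        · exact h
      have hiuv : u < v := idx_lt u v hbvu
      have hivc : v < σ n0 := idx_lt v (σ n0) hcv.2.2
      have hiqp : q < p := idx_lt q p hbpq
      have hap0 : (Δ p).a < (Δ n0).a := hp.1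
      have haq0 : (Δ q).a < (Δ n0).a := hq.1
      have hacu : (Δ (σ n0)).a < (Δ u).a := hcu.1
      have hq0 : q ≠ n0 := fun h => by rw [h] at haq0; omega
      have hv0 : v ≠ n0 := by
        intro h
        have hu0' : u ≠ n0 := fun h' => by rw [h, h'] at hbvu; omega
        have h2 := hbmax u hu0'
        rw [h] at hbvu; omega
      have case2 : p < σ n0 → False := by
        intro hpc
        have hqc : q ≠ σ n0 := ne_of_lt (hiqp.trans hpc)
        exact hav1 (contains4231 σ Δ hσ (σ n0) q p n0 (hamin q hqc) haqp hap0
          (ne0 q hq0) hiqp hpc)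
      have hcp : σ n0 < p := by
        rcases lt_trichotomy p (σ n0) with h | h | h
        · exact (case2 h).elim
        · exfalso
          have hqc : q ≠ σ n0 := fun hh => hpq (by rw [hh, h])
          have h2 := hamin q hqc
          rw [h] at haqp; omega
        · exact h
      by_cases hu0 : u = n0
      · have hap_u : (Δ p).a < (Δ u).a := by rw [hu0]; exact hap0
        exact hav2 (contains3412 σ Δ hσ (σ n0) p u v (hamin p (ne_of_gt hcp)) hap_u hauv
          hiuv hivc hcp)
      · rcases lt_trichotomy ((Δ v).a) ((Δ n0).a) with hv | hv | hv
        · exact hav1 (contains4231 σ Δ hσ (σ n0) u v n0 hacu hauv hv (ne0 u hu0) hiuv hivc)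
        · exact absurd (ha _ _ hv) hv0
        · rcases lt_trichotomy ((Δ p).a) ((Δ u).a) with hpu | hpu | hpu
          · exact hav2 (contains3412 σ Δ hσ (σ n0) p u v (hamin p (ne_of_gt hcp)) hpu hauv
              hiuv hivc hcp)
          · exfalso
            have h2 : u < p := hiuv.trans (hivc.trans hcp)
            rw [ha _ _ hpu] at h2
            exact absurd h2 (lt_irrefl _)
          · exact hav2 (contains3412 σ Δ hσ (σ n0) p n0 v (hamin p (ne_of_gt hcp)) hap0 hv
              (ne0 v hv0) hivc hcp)
  -- Part 2
  have part2 : Good Δ nl ∨ Good Δ (σ nl) := by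
    by_cases h1 : ∀ u v : Fin N, (Δ nl).prec (Δ u) → (Δ nl).prec (Δ v) →
        (Δ u).a < (Δ v).a → (Δ u).b < (Δ v).b
    · exact Or.inl (Or.inr (good_l h1))
    · push_neg at h1
      obtain ⟨u, v, hcu, hcv, hauv, hbvu'⟩ := h1
      have huv : u ≠ v := fun h => by rw [h] at hauv; omega
      have hbvu : (Δ v).b < (Δ u).b := by
        rcases lt_or_eq_of_le hbvu' with h | h
        · exact h
        · exact absurd (hbinj v u h) (Ne.symm huv)
      refine Or.inr (Or.inl (good_d ?_))
      intro p q hp hq hbpq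
      by_contra hnapq
      have hpq : p ≠ q := fun h => by rw [h] at hbpq; omega
      have haqp : (Δ q).a < (Δ p).a := by
        rcases lt_trichotomy ((Δ p).a) ((Δ q).a) with h | h | h
        · exact absurd h hnapq
        · exact absurd (ha _ _ h) hpq
        · exact h
      have hiuv : u < v := idx_lt u v hbvu
      have hivl : v < nl := idx_lt v nl hcv.2.2
      have hiqp : q < p := idx_lt q p hbpq
      have hidq : σ nl < q := idx_lt (σ nl) q hq.2.2
      have haeu : (Δ nl).a < (Δ u).a := hcu.1
      have hqnl : q < nl := lt_of_lt_of_le hiqp (le_nl p)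
      have case2' : σ nl < u → False := by
        intro hdu
        have hvd : v ≠ σ nl := ne_of_gt (hdu.trans hiuv)
        exact hav1 (contains4231 σ Δ hσ nl u v (σ nl) haeu hauv (hamax v hvd) hdu hiuv hivl)
      have hud : u < σ nl := by
        rcases lt_trichotomy u (σ nl) with h | h | h
        · exact h
        · exfalso
          rw [h] at hauv
          have hvd : v ≠ σ nl := fun hh => by rw [hh] at hauv; omega
          have h2 := hamax v hvd
          omega
        · exact (case2' h).elim
      by_cases hpl : p = nl
      · have hpu : (Δ p).a < (Δ u).a := by rw [hpl]; exact haeu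
        exact hav2 (contains3412 σ Δ hσ q p u (σ nl) haqp hpu (hamax u (ne_of_lt hud))
          hud hidq hiqp)
      · have hpl' : p < nl := neL p hpl
        rcases lt_trichotomy ((Δ q).a) ((Δ nl).a) with hq1 | hq1 | hq1
        · rcases lt_trichotomy ((Δ p).a) ((Δ u).a) with hpu | hpu | hpu
          · exact hav2 (contains3412 σ Δ hσ q p u (σ nl) haqp hpu (hamax u (ne_of_lt hud))
              hud hidq hiqp)
          · exfalso
            have h2 : u < p := hud.trans (hidq.trans hiqp)
            rw [ha _ _ hpu] at h2
            exact absurd h2 (lt_irrefl _)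
          · exact hav2 (contains3412 σ Δ hσ q nl u (σ nl) hq1 haeu (hamax u (ne_of_lt hud))
              hud hidq hqnl)
        · exfalso
          have h2 := ha _ _ hq1
          rw [h2] at hqnl
          exact absurd hqnl (lt_irrefl _)
        · exact hav1 (contains4231 σ Δ hσ nl q p (σ nl) hq1 haqp
            (hamax p (ne_of_gt (hidq.trans hiqp))) hidq hiqp hpl')
  -- Part 3
  have part3 : σ nl = n0 → GoodRight Δ nl := by
    intro hσl
    apply good_l
    intro u v hcu hcv hauv
    by_contra hnbuv
    have huv : u ≠ v := fun h => by rw [h] at hauv; omega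
    have hbvu : (Δ v).b < (Δ u).b := by
      rcases lt_trichotomy ((Δ u).b) ((Δ v).b) with h | h | h
      · exact absurd h hnbuv
      · exact absurd (hbinj u v h) huv
      · exact h
    have hiuv : u < v := idx_lt u v hbvu
    have hivl : v < nl := idx_lt v nl hcv.2.2
    have hv0 : v ≠ n0 := by
      intro h
      rw [h] at hiuv
      exact absurd hiuv (by rw [Fin.lt_def]; simp [hn0])
    have hu0 : u ≠ n0 := by
      intro h
      have hvd : v ≠ σ nl := by rw [hσl]; exact hv0
      have h2 := hamax v hvd
      rw [hσl, ← h] at h2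
      omega
    have h34 : (Δ v).a < (Δ n0).a := by
      have h2 := hamax v (by rw [hσl]; exact hv0)
      rwa [hσl] at h2
    exact hav1 (contains4231 σ Δ hσ nl u v n0 hcu.1 hauv h34 (ne0 u hu0) hiuv hivl)
  -- Part 4
  have part4 : σ n0 = nl → GoodLeft Δ n0 := by
    intro hσ0
    apply good_0
    intro p q hp hq hbpq
    by_contra hnapq
    have hpq : p ≠ q := fun h => by rw [h] at hbpq; omega
    have haqp : (Δ q).a < (Δ p).a := by
      rcases lt_trichotomy ((Δ p).a) ((Δ q).a) with h | h | h
      · exact absurd h hnapq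
      · exact absurd (ha _ _ h) hpq
      · exact h
    have hiqp : q < p := idx_lt q p hbpq
    have haq0 : (Δ q).a < (Δ n0).a := hq.1
    have hq0 : q ≠ n0 := fun h => by rw [h] at haq0; omega
    have hpl : p ≠ nl := by
      intro h
      have hq' : q ≠ σ n0 := by rw [hσ0, ← h]; exact ne_of_lt hiqp
      have h2 := hamin q hq'
      rw [hσ0, ← h] at h2
      omega
    have hpl' : p < nl := neL p hpl
    have h12 : (Δ nl).a < (Δ q).a := by
      have hq' : q ≠ σ n0 := by rw [hσ0]; exact ne_of_lt (hiqp.trans hpl')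
      have h2 := hamin q hq'
      rwa [hσ0] at h2
    exact hav1 (contains4231 σ Δ hσ nl q p n0 h12 haqp hp.1 (ne0 q hq0) hiqp hpl')
  -- Part 5
  have part5 : σ nl = n0 ∧ σ n0 = nl → IsLadder Δ Finset.univ := by
    rintro ⟨h5a, h5b⟩
    have hmono : ∀ i j : Fin N, i < j → (Δ j).a < (Δ i).a := by
      intro i j hij
      rcases lt_trichotomy ((Δ j).a) ((Δ i).a) with h | h | h
      · exact h
      · exact absurd (ha _ _ h) (ne_of_gt hij)
      · exfalso
        have hle0 : n0 ≤ i := by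
          rw [Fin.le_def]; simp [hn0]
        have hjn0 : j ≠ n0 := ne_of_gt (lt_of_le_of_lt hle0 hij)
        have hinl : i ≠ nl := ne_of_lt (lt_of_lt_of_le hij (le_nl j))
        have hi0 : i ≠ n0 := by
          intro hh
          rw [hh] at h
          have h2 := hamax j (by rw [h5a]; exact hjn0)
          rw [h5a] at h2; omega
        have hjl : j ≠ nl := by
          intro hh
          rw [hh] at h
          have h2 := hamin i (by rw [h5b]; exact hinl)
          rw [h5b] at h2; omega
        have h1 : (Δ nl).a < (Δ i).a := by
          have h2 := hamin i (by rw [h5b]; exact hinl)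
          rwa [h5b] at h2
        have h4 : (Δ j).a < (Δ n0).a := by
          have h2 := hamax j (by rw [h5a]; exact hjn0)
          rwa [h5a] at h2
        exact hav1 (contains4231 σ Δ hσ nl i j n0 h1 h h4 (ne0 i hi0) hij (neL j hjl))
    have hcard : (Finset.univ : Finset (Fin N)).card = N := by simp
    refine ⟨⟨fun k => ⟨⟨k.val, by have h := k.isLt; omega⟩, Finset.mem_univ _⟩,
      fun x => ⟨x.val.val, by have h := x.val.isLt; omega⟩, ?_, ?_⟩, ?_⟩
    · intro k; rfl
    · intro x; rfl
    · intro k l hkl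
      have hkl' : (⟨k.val, by have h := k.isLt; omega⟩ : Fin N) <
          ⟨l.val, by have h := l.isLt; omega⟩ := by
        rw [Fin.lt_def]; exact hkl
      exact ⟨hmono _ _ hkl', hb _ _ hkl'⟩
  exact ⟨part1, part2, part3, part4, part5⟩
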